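/- Let G be the graph on the 13 vectors (1,0,0), (0,1,0), (0,0,1), (0,1,1), (1,0,1), (1,1,0), (0,1,−1), (1,0,−1), (1,−1,0), (−1,1,1), (1,−1,1), (1,1,−1), (1,1,1) in ℝ³, with adjacency given by orthogonality (u·v = 0). Then G has no proper 3-coloring. -/

import Mathlib

/-- The 13 vectors of DeCorte's configuration. -/
def ksVecs : Fin 13 → Fin 3 → ℝ :=
  ![![1,0,0], ![0,1,0], ![0,0,1],
    ![0,1,1], ![1,0,1], ![1,1,0],
    ![0,1,-1], ![1,0,-1], ![1,-1,0],
    ![-1,1,1], ![1,-1,1], ![1,1,-1],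
    ![1,1,1]]

def adjB : Fin 13 → Fin 13 → Bool :=
  ![![false,true,true,true,false,false,true,false,false,false,false,false,false],
  ![true,false,true,false,true,false,false,true,false,false,false,false,false],
  ![true,true,false,false,false,true,false,false,true,false,false,false,false],
  ![true,false,false,false,false,false,true,false,false,false,true,true,false],
  ![false,true,false,false,false,false,false,true,false,true,false,true,false],
  ![false,false,true,false,false,false,false,false,true,true,true,false,false],
  ![true,false,false,true,false,false,false,false,false,true,false,false,true],
  ![false,true,false,false,true,false,false,false,false,false,true,false,true],
  ![false,false,true,false,false,true,false,false,false,false,false,true,true],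
  ![false,false,false,false,true,true,true,false,false,false,false,false,false],
  ![false,false,false,true,false,true,false,true,false,false,false,false,false],
  ![false,false,false,true,true,false,false,false,true,false,false,false,false],
  ![false,false,false,false,false,false,true,true,true,false,false,false,false]]

lemma adj_dot : ∀ i j : Fin 13, adjB i j = true →
    (∑ k, ksVecs i k * ksVecs j k) = 0 := by
  intro i j h
  fin_cases i <;> fin_cases j <;>
    first
      | exact absurd h (by decide)
      | norm_num [ksVecs, Fin.sum_univ_three, Matrix.cons_val_two, Matrix.vecHead, Matrix.vecTail]

lemma adj_irrefl : ∀ i : Fin 13, adjB i i = false := by decide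

def ext (l : List (Fin 13 × Fin 3)) (i : Fin 13) (x : Fin 3) : Bool :=
  l.all fun p => !(adjB i p.1) || decide (x ≠ p.2)

def search (l : List (Fin 13 × Fin 3)) : List (Fin 13) → Bool
  | [] => true
  | i :: rest => (List.finRange 3).any fun x => ext l i x && search ((i, x) :: l) rest

set_option maxRecDepth 10000 in
lemma searchFalse : search [] (List.finRange 13) = false := by decide

lemma search_sound (c : Fin 13 → Fin 3)
    (hc : ∀ i j : Fin 13, adjB i j = true → c i ≠ c j) :
    ∀ (is : List (Fin 13)) (l : List (Fin 13 × Fin 3)),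
      (∀ p ∈ l, p.2 = c p.1) → search l is = true := by
  intro is
  induction is with
  | nil => intro l _; rfl
  | cons i rest ih =>
    intro l hl
    simp only [search, List.any_eq_true]
    refine ⟨c i, List.mem_finRange _, ?_⟩
    rw [Bool.and_eq_true]
    constructor
    · simp only [ext, List.all_eq_true]
      intro p hp
      rw [Bool.or_eq_true]
      by_cases ha : adjB i p.1 = true
      · right
        simp only [decide_eq_true_eq]
        rw [hl p hp]
        exact hc i p.1 ha
      · left
        simp [ha]
    · exact ih ((i, c i) :: l) (by
        intro p hp
        rcases List.mem_cons.mp hp with h | h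
        · rw [h]
        · exact hl p h)

theorem stmt_5 :
    ¬ ∃ c : Fin 13 → Fin 3, ∀ i j : Fin 13,
      (∑ k, ksVecs i k * ksVecs j k) = 0 → i ≠ j → c i ≠ c j := by
  rintro ⟨c, hc⟩
  have hc' : ∀ i j : Fin 13, adjB i j = true → c i ≠ c j := by
    intro i j h
    have hij : i ≠ j := by
      rintro rfl
      rw [adj_irrefl i] at h
      exact Bool.false_ne_true h
    exact hc i j (adj_dot i j h) hij
  have := search_sound c hc' (List.finRange 13) [] (by simp)
  rw [searchFalse] at this
  exact Bool.false_ne_true this
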